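/- The kernel of the ring homomorphism ℤ[u] → R_N obtained by evaluating integer polynomials at E_1 (the class of the truncated exponential Σ_{m=0}^{N−1} v^m/m!) is exactly the ideal of ℤ[u] generated by (u−1)^N. Moreover, for every k ∈ ℤ the element E_k lies in the additive subgroup of R_N generated by E_0, E_1, …, E_{N−1}. -/

import Mathlib

noncomputable section

/-- The truncation ring `R_N = ℚ[v]/(v^N)`. -/
abbrev RN (N : ℕ) := Polynomial ℚ ⧸ Ideal.span {(Polynomial.X : Polynomial ℚ) ^ N}

/-- `E_k ∈ R_N`: the class of the truncated exponential `∑_{m=0}^{N-1} k^m v^m / m!`. -/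
def E (N : ℕ) (k : ℤ) : RN N :=
  Ideal.Quotient.mk _
    (∑ m ∈ Finset.range N, Polynomial.C ((k : ℚ) ^ m / m.factorial) * Polynomial.X ^ m)

open Polynomial Finset

/-- Representative polynomial of `E N k`. -/
def ff (N : ℕ) (k : ℤ) : Polynomial ℚ :=
  ∑ m ∈ Finset.range N, Polynomial.C ((k : ℚ) ^ m / m.factorial) * Polynomial.X ^ m

lemma E_eq_mk (N : ℕ) (k : ℤ) : E N k = Ideal.Quotient.mk _ (ff N k) := rfl

lemma coeff_ff (N : ℕ) (k : ℤ) {i : ℕ} (hi : i < N) :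
    (ff N k).coeff i = (k : ℚ) ^ i / i.factorial := by
  rw [ff, finset_sum_coeff]
  rw [Finset.sum_eq_single i]
  · simp
  · intro b _ hb
    simp [coeff_X_pow, hb.symm]
  · intro h; exact absurd (Finset.mem_range.2 hi) h

lemma mk_X_pow_dvd (N : ℕ) {p : Polynomial ℚ} (h : (X:Polynomial ℚ)^N ∣ p) :
    Ideal.Quotient.mk (Ideal.span {(X : Polynomial ℚ) ^ N}) p = 0 := by
  rw [Ideal.Quotient.eq_zero_iff_mem, Ideal.mem_span_singleton]
  exact h

lemma mk_eq_mk_of_dvd (N : ℕ) {p q : Polynomial ℚ} (h : (X:Polynomial ℚ)^N ∣ p - q) :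
    Ideal.Quotient.mk (Ideal.span {(X : Polynomial ℚ) ^ N}) p = Ideal.Quotient.mk _ q := by
  rw [Ideal.Quotient.eq, Ideal.mem_span_singleton]
  exact h

lemma keyM (N : ℕ) (a b : ℤ) : (X : Polynomial ℚ)^N ∣ ff N a * ff N b - ff N (a+b) := by
  rw [Polynomial.X_pow_dvd_iff]
  intro d hd
  rw [coeff_sub, coeff_mul, coeff_ff N _ hd]
  have h1 : ∀ p ∈ Finset.HasAntidiagonal.antidiagonal d, (ff N a).coeff p.1 * (ff N b).coeff p.2 =
      (a:ℚ)^p.1/p.1.factorial * ((b:ℚ)^p.2/p.2.factorial) := by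
    intro p hp
    rw [Finset.HasAntidiagonal.mem_antidiagonal] at hp
    rw [coeff_ff N a (lt_of_le_of_lt (hp ▸ Nat.le_add_right _ _) hd),
        coeff_ff N b (lt_of_le_of_lt (hp ▸ Nat.le_add_left _ _) hd)]
  rw [Finset.sum_congr rfl h1, Finset.Nat.sum_antidiagonal_eq_sum_range_succ_mk]
  push_cast
  rw [add_pow, Finset.sum_div, sub_eq_zero]
  apply Finset.sum_congr rfl
  intro k hk
  have hkd : k ≤ d := Nat.lt_succ_iff.mp (Finset.mem_range.mp hk)
  rw [Nat.cast_choose ℚ hkd]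
  have h0 : (k.factorial : ℚ) ≠ 0 := Nat.cast_ne_zero.2 k.factorial_ne_zero
  have h1 : ((d-k).factorial : ℚ) ≠ 0 := Nat.cast_ne_zero.2 (d-k).factorial_ne_zero
  have h2 : (d.factorial : ℚ) ≠ 0 := Nat.cast_ne_zero.2 d.factorial_ne_zero
  field_simp

lemma E_mul (N : ℕ) (a b : ℤ) : E N a * E N b = E N (a + b) := by
  rw [E_eq_mk, E_eq_mk, E_eq_mk, ← map_mul]
  exact mk_eq_mk_of_dvd N (keyM N a b)

lemma E_zero (N : ℕ) (hN : 1 ≤ N) : E N 0 = 1 := by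
  rw [E_eq_mk]
  have : ff N 0 = 1 := by
    rw [ff, Finset.sum_eq_single_of_mem 0 (Finset.mem_range.2 hN)]
    · simp
    · intro b _ hb
      simp [zero_pow hb]
  rw [this, map_one]

lemma E_one_sub_one_pow (N : ℕ) (hN : 1 ≤ N) : (E N 1 - 1) ^ N = 0 := by
  have h1 : E N 1 - 1 = Ideal.Quotient.mk _ (ff N 1 - 1) := by
    rw [E_eq_mk, map_sub, map_one]
  rw [h1, ← map_pow]
  apply mk_X_pow_dvd
  have hx : (X : Polynomial ℚ) ∣ ff N 1 - 1 := by
    rw [X_dvd_iff, coeff_sub, coeff_ff N 1 hN]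
    simp
  obtain ⟨w, hw⟩ := hx
  rw [hw, mul_pow]
  exact dvd_mul_right _ _

lemma E_pow (N : ℕ) (m : ℤ) (j : ℕ) : E N m * (E N 1)^j = E N (m + j) := by
  induction j with
  | zero => simp
  | succ n ih =>
    rw [pow_succ, ← mul_assoc, ih, E_mul]
    push_cast
    ring_nf

lemma lemB (N : ℕ) (hN : 1 ≤ N) (m : ℤ) :
    ∑ j ∈ Finset.range (N+1), ((-1:ℤ)^(j+N) * (N.choose j)) • E N (m + j) = 0 := by
  have h0 : ∑ j ∈ Finset.range (N+1), ((-1:ℤ)^(j+N) * (N.choose j)) • ((E N 1)^j) = 0 := by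
    rw [← E_one_sub_one_pow N hN, sub_pow]
    apply Finset.sum_congr rfl
    intro j _
    push_cast [zsmul_eq_mul]
    ring
  have hterm : ∀ j ∈ Finset.range (N+1), ((-1:ℤ)^(j+N) * (N.choose j)) • E N (m + j) =
      E N m * (((-1:ℤ)^(j+N) * (N.choose j)) • (E N 1)^j) := by
    intro j _
    rw [← E_pow, mul_smul_comm]
  rw [Finset.sum_congr rfl hterm, ← Finset.mul_sum, h0, mul_zero]

lemma mem_nat (N : ℕ) (hN : 1 ≤ N) : ∀ k : ℕ,
    E N k ∈ AddSubgroup.closure (Set.range fun m : Fin N => E N (m : ℕ)) := by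
  intro k
  induction k using Nat.strong_induction_on with
  | _ k ih =>
    by_cases hk : k < N
    · exact AddSubgroup.subset_closure ⟨⟨k, hk⟩, rfl⟩
    · push_neg at hk
      have hB := lemB N hN ((k:ℤ) - N)
      rw [Finset.sum_range_succ] at hB
      have hco : ((-1:ℤ)^(N+N) * (N.choose N)) = 1 := by
        simp [← two_mul, pow_mul]
      have harg : ((k:ℤ) - N + N) = (k:ℤ) := by ring
      rw [hco, one_smul, harg] at hB
      have hS : ∑ j ∈ Finset.range N, ((-1:ℤ)^(j+N) * (N.choose j)) • E N ((k:ℤ) - N + j) ∈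
          AddSubgroup.closure (Set.range fun m : Fin N => E N (m : ℕ)) := by
        apply AddSubgroup.sum_mem
        intro j hj
        have hj' := Finset.mem_range.mp hj
        have harg2 : (k:ℤ) - N + j = ((k - N + j : ℕ) : ℤ) := by push_cast; omega
        rw [harg2]
        exact AddSubgroup.zsmul_mem _ (ih _ (by omega)) _
      have hE : E N (k:ℤ) = -(∑ j ∈ Finset.range N,
          ((-1:ℤ)^(j+N) * (N.choose j)) • E N ((k:ℤ) - N + j)) :=
        eq_neg_of_add_eq_zero_right hB
      rw [hE]
      exact AddSubgroup.neg_mem _ hS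

lemma mem_int (N : ℕ) (hN : 1 ≤ N) : ∀ k : ℤ,
    E N k ∈ AddSubgroup.closure (Set.range fun m : Fin N => E N (m : ℕ)) := by
  have hneg : ∀ k : ℕ, E N (-(k:ℤ)) ∈
      AddSubgroup.closure (Set.range fun m : Fin N => E N (m : ℕ)) := by
    intro k
    induction k using Nat.strong_induction_on with
    | _ k ih =>
      rcases Nat.eq_zero_or_pos k with hk0 | hk0
      · subst hk0
        simpa using mem_nat N hN 0
      · have hB := lemB N hN (-(k:ℤ))
        rw [Finset.sum_range_succ'] at hB
        have hS : ∑ j ∈ Finset.range N,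
            ((-1:ℤ)^((j+1)+N) * (N.choose (j+1))) • E N (-(k:ℤ) + (j+1)) ∈
            AddSubgroup.closure (Set.range fun m : Fin N => E N (m : ℕ)) := by
          apply AddSubgroup.sum_mem
          intro j hj
          by_cases hpos : (0:ℤ) ≤ -(k:ℤ) + (j+1)
          · rw [show -(k:ℤ) + (j+1) = (((-(k:ℤ) + (j+1)).toNat : ℕ) : ℤ) from
              (Int.toNat_of_nonneg hpos).symm]
            exact AddSubgroup.zsmul_mem _ (mem_nat N hN _) _
          · have harg : -(k:ℤ) + (j+1) = -((k - (j+1) : ℕ) : ℤ) := by omega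
            rw [harg]
            exact AddSubgroup.zsmul_mem _ (ih _ (by omega)) _
        simp only [Nat.cast_zero, add_zero, zero_add, Nat.choose_zero_right, Nat.cast_one,
          mul_one, Nat.cast_add] at hB
        have hE : ((-1:ℤ)^N) • E N (-(k:ℤ)) = -(∑ j ∈ Finset.range N,
            ((-1:ℤ)^((j+1)+N) * (N.choose (j+1))) • E N (-(k:ℤ) + (j+1))) :=
          eq_neg_of_add_eq_zero_right hB
        have hsq : ((-1:ℤ)^N) • (((-1:ℤ)^N) • E N (-(k:ℤ))) = E N (-(k:ℤ)) := by
          rw [smul_smul, ← pow_add]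
          rw [Even.neg_one_pow ⟨N, rfl⟩, one_smul]
        rw [← hsq, hE]
        exact AddSubgroup.zsmul_mem _ (AddSubgroup.neg_mem _ hS) _
  intro k
  rcases Int.eq_nat_or_neg k with ⟨n, rfl | rfl⟩
  · exact mem_nat N hN n
  · exact hneg n

lemma lemA (w : Polynomial ℚ) (hw : w.coeff 0 ≠ 0) :
    ∀ (N : ℕ) (s : Polynomial ℚ),
      s.natDegree < N → (X : Polynomial ℚ)^N ∣ s.comp (X * w) → s = 0 := by
  intro N
  induction N with
  | zero => exact fun s hs _ => absurd hs (Nat.not_lt_zero _)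
  | succ n ih =>
    intro s hs hdvd
    have hc0 : s.coeff 0 = 0 := by
      have hXdvd : (X : Polynomial ℚ) ∣ s.comp (X * w) :=
        dvd_trans (dvd_pow_self X (Nat.succ_ne_zero n)) hdvd
      rw [X_dvd_iff, coeff_zero_eq_eval_zero, eval_comp] at hXdvd
      simpa [coeff_zero_eq_eval_zero] using hXdvd
    by_cases hdeg : s.natDegree = 0
    · rw [Polynomial.eq_C_of_natDegree_eq_zero hdeg, hc0, map_zero]
    · have hsX : s = X * s.divX := by
        conv_lhs => rw [← Polynomial.X_mul_divX_add s]
        rw [hc0, map_zero, add_zero]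
      have hnd : (s.divX).natDegree < n := by
        rw [Polynomial.natDegree_divX_eq_natDegree_tsub_one]
        omega
      have hcomp : s.comp (X * w) = (X * w) * ((s.divX).comp (X * w)) := by
        conv_lhs => rw [hsX]
        rw [mul_comp, X_comp]
      have h2 : (X : Polynomial ℚ)^n ∣ w * ((s.divX).comp (X * w)) := by
        have hstep : (X : Polynomial ℚ) * ((X : Polynomial ℚ)^n) ∣
            X * (w * (s.divX).comp (X * w)) := by
          rw [← pow_succ']
          rw [hcomp] at hdvd
          convert hdvd using 1
          ring_nf
        exact (mul_dvd_mul_iff_left (X_ne_zero : (X : Polynomial ℚ) ≠ 0)).mp hstep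
      have h3 : (X : Polynomial ℚ)^n ∣ (s.divX).comp (X * w) := by
        have hnotdvd : ¬ (X : Polynomial ℚ) ∣ w := by rw [X_dvd_iff]; exact hw
        exact Polynomial.prime_X.pow_dvd_of_dvd_mul_left n hnotdvd h2
      rw [hsX, ih _ hnd h3, mul_zero]

/-- The auxiliary `w` with `ff (N+1) 1 = 1 + X * w`. -/
def wp (N : ℕ) : Polynomial ℚ :=
  ∑ m ∈ Finset.range N, Polynomial.C ((1:ℚ) / (m+1).factorial) * Polynomial.X ^ m

lemma ff_succ_one (N : ℕ) : ff (N+1) 1 = 1 + X * wp N := by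
  rw [ff, Finset.sum_range_succ', wp, Finset.mul_sum]
  simp only [one_pow, Nat.factorial_zero, Nat.cast_one, pow_zero, mul_one]
  rw [add_comm]
  congr 1
  · norm_num
  · apply Finset.sum_congr rfl
    intro m _
    push_cast
    ring_nf

lemma mk_ff_succ (N : ℕ) :
    Ideal.Quotient.mk (Ideal.span {(X : Polynomial ℚ) ^ N}) (ff (N+1) 1) = E N 1 := by
  rw [E_eq_mk]
  apply mk_eq_mk_of_dvd
  have h : ff (N+1) 1 - ff N 1 = C ((1:ℚ)^N / N.factorial) * X^N := by
    rw [ff, ff, Finset.sum_range_succ, add_sub_cancel_left]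
    norm_num
  rw [h]
  exact ⟨C ((1:ℚ)^N / N.factorial), mul_comm _ _⟩

lemma coeff_wp (N : ℕ) (hN : 1 ≤ N) : (wp N).coeff 0 = 1 := by
  rw [wp, finset_sum_coeff, Finset.sum_eq_single_of_mem 0 (Finset.mem_range.2 hN)]
  · simp
  · intro b _ hb
    simp [coeff_X_pow, Ne.symm hb]

/-- Translation: evaluation at `E N 1` equals `mk` of composition with `ff (N+1) 1`. -/
lemma eval_eq_mk_comp (N : ℕ) (p : Polynomial ℤ) :
    Polynomial.eval₂RingHom (Int.castRingHom (RN N)) (E N 1) p =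
      Ideal.Quotient.mk (Ideal.span {(X : Polynomial ℚ) ^ N})
        ((p.map (Int.castRingHom ℚ)).comp (ff (N+1) 1)) := by
  have hmk : Ideal.Quotient.mk (Ideal.span {(X : Polynomial ℚ) ^ N})
      ((p.map (Int.castRingHom ℚ)).comp (ff (N+1) 1)) =
      Polynomial.eval₂ ((Ideal.Quotient.mk _).comp (C : ℚ →+* Polynomial ℚ)) (E N 1)
        (p.map (Int.castRingHom ℚ)) := by
    rw [Polynomial.comp, Polynomial.hom_eval₂, mk_ff_succ]
  rw [coe_eval₂RingHom, hmk, Polynomial.eval₂_map]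
  congr 1

theorem ker_part (N : ℕ) (hN : 1 ≤ N) :
    RingHom.ker (Polynomial.eval₂RingHom (Int.castRingHom (RN N)) (E N 1)) =
      Ideal.span {((Polynomial.X : Polynomial ℤ) - 1) ^ N} := by
  have hzero : Polynomial.eval₂RingHom (Int.castRingHom (RN N)) (E N 1)
      (((X : Polynomial ℤ) - 1) ^ N) = 0 := by
    rw [map_pow, map_sub, map_one]
    have hX : Polynomial.eval₂RingHom (Int.castRingHom (RN N)) (E N 1) X = E N 1 := by
      simp [coe_eval₂RingHom]
    rw [hX, E_one_sub_one_pow N hN]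
  apply le_antisymm
  · intro p hp
    rw [RingHom.mem_ker] at hp
    have hmonic : (((X : Polynomial ℤ) - 1) ^ N).Monic := by
      have : ((X : Polynomial ℤ) - 1) = X - C 1 := by rw [C_1]
      rw [this]
      exact (monic_X_sub_C 1).pow N
    have hdecomp := Polynomial.modByMonic_add_div p (((X : Polynomial ℤ) - 1) ^ N)
    set r := p %ₘ (((X : Polynomial ℤ) - 1) ^ N) with hr
    have hr0 : r = 0 := by
      by_contra hne
      have hdeg : r.natDegree < N := by
        have h1 := Polynomial.degree_modByMonic_lt p hmonic
        have h2 : (((X : Polynomial ℤ) - 1) ^ N).degree = N := by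
          rw [show ((X : Polynomial ℤ) - 1) = X - C 1 by rw [C_1], Polynomial.degree_pow,
            Polynomial.degree_X_sub_C]
          simp
        rw [h2] at h1
        exact_mod_cast (Polynomial.natDegree_lt_iff_degree_lt hne).2 h1
      have hrk : Polynomial.eval₂RingHom (Int.castRingHom (RN N)) (E N 1) r = 0 := by
        have h := congrArg (Polynomial.eval₂RingHom (Int.castRingHom (RN N)) (E N 1)) hdecomp
        rw [map_add, map_mul, hzero, zero_mul, add_zero, hp] at h
        exact h
      rw [eval_eq_mk_comp] at hrk
      set rQ := r.map (Int.castRingHom ℚ) with hrQdef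
      have hdvd : (X : Polynomial ℚ)^N ∣ rQ.comp (ff (N+1) 1) := by
        rw [← Ideal.mem_span_singleton, ← Ideal.Quotient.eq_zero_iff_mem]
        exact hrk
      have hrQ0 : rQ ≠ 0 := by
        intro h
        exact hne (Polynomial.map_injective (Int.castRingHom ℚ)
          (RingHom.injective_int _) (by simpa using h))
      have h11 : ((X : Polynomial ℚ) + 1).natDegree = 1 := by
        rw [show ((X : Polynomial ℚ) + 1) = X + C 1 by rw [C_1]]
        exact natDegree_X_add_C _
      have hsdeg : (rQ.comp (X + 1)).natDegree < N := by
        rw [Polynomial.natDegree_comp, h11, mul_one]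
        exact lt_of_le_of_lt natDegree_map_le hdeg
      have hcomp : (rQ.comp (X + 1)).comp (X * wp N) = rQ.comp (ff (N+1) 1) := by
        rw [Polynomial.comp_assoc]
        congr 1
        rw [add_comp, X_comp, one_comp, ff_succ_one, add_comm]
      have hwne : (wp N).coeff 0 ≠ 0 := by rw [coeff_wp N hN]; norm_num
      have hs0 := lemA (wp N) hwne N (rQ.comp (X + 1)) hsdeg (hcomp ▸ hdvd)
      have hXX : ((X : Polynomial ℚ) + 1).comp (X - 1) = X := by
        rw [add_comp, X_comp, one_comp, sub_add_cancel]
      have hback : rQ = (rQ.comp (X + 1)).comp (X - 1) := by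
        rw [Polynomial.comp_assoc, hXX, Polynomial.comp_X]
      rw [hs0, zero_comp] at hback
      exact hrQ0 hback
    rw [← hdecomp, hr0, zero_add]
    exact Ideal.mem_span_singleton.2 ⟨_, rfl⟩
  · rw [Ideal.span_le, Set.singleton_subset_iff, SetLike.mem_coe, RingHom.mem_ker]
    exact hzero

/-- The kernel of the evaluation homomorphism `ℤ[u] → R_N`, `u ↦ E_1`, is the ideal
generated by `(u-1)^N`; moreover every `E_k` (`k ∈ ℤ`) lies in the additive subgroup
of `R_N` generated by `E_0, …, E_{N-1}`. -/
theorem ker_eval_E_one (N : ℕ) (hN : 1 ≤ N) :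
    RingHom.ker (Polynomial.eval₂RingHom (Int.castRingHom (RN N)) (E N 1)) =
      Ideal.span {((Polynomial.X : Polynomial ℤ) - 1) ^ N} ∧
    ∀ k : ℤ, E N k ∈ AddSubgroup.closure (Set.range fun m : Fin N => E N (m : ℕ)) := by
  exact ⟨ker_part N hN, mem_int N hN⟩
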